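/- Every quasi-choice correspondence over a finite set that satisfies Axiom α is 0-majoritarian, i.e., it equals the union of a finite family of freely rationalizable quasi-choices (ballots). -/
import Mathlib


/-- `r` rationalizes the quasi-choice `c`: `c A` is the set of `r`-maximal elements of `A`. -/
def Rationalizes {X : Type*} (r : X → X → Prop) (c : Set X → Set X) : Prop :=
  ∀ A : Set X, c A = {a ∈ A | ∀ b ∈ A, ¬ r b a}

/-- `c` is freely rationalizable (a ballot): rationalized by an arbitrary binary relation. -/
def FreelyRat {X : Type*} (c : Set X → Set X) : Prop :=
  ∃ r : X → X → Prop, Rationalizes r c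

/-- `c` is asymmetrically rationalizable. -/
def AsymRat {X : Type*} (c : Set X → Set X) : Prop :=
  ∃ r : X → X → Prop, (∀ a b, r a b → ¬ r b a) ∧ Rationalizes r c

/-- Contractiveness: `c` is a quasi-choice. -/
def IsQuasiChoice {X : Type*} (c : Set X → Set X) : Prop :=
  ∀ A : Set X, c A ⊆ A

/-- Axiom α (Chernoff, Standard Contraction Consistency). -/
def AxiomAlpha {X : Type*} (c : Set X → Set X) : Prop :=
  ∀ ⦃A B : Set X⦄ ⦃x : X⦄, A ⊆ B → x ∈ A → x ∈ c B → x ∈ c A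

/-- Axiom γ (Standard Expansion Consistency). -/
def AxiomGamma {X : Type*} (c : Set X → Set X) : Prop :=
  ∀ ⦃A B : Set X⦄ ⦃x : X⦄, x ∈ c A → x ∈ c B → x ∈ c (A ∪ B)

/-- A liberal representation of `c` by the family of ballots `v`. -/
def IsLiberalRep {X : Type*} (c : Set X → Set X) {k : ℕ} (v : Fin k → Set X → Set X) : Prop :=
  (∀ i, FreelyRat (v i)) ∧
    ∀ A : Set X, ∀ x ∈ A, (x ∈ c A ↔ ∃ i, x ∈ v i A)

/-- A democratic representation of `c` by the family of ballots `v`: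
an item is chosen iff more than half of the ballots endorse it. -/
def IsDemRep {X : Type*} (c : Set X → Set X) {k : ℕ} (v : Fin k → Set X → Set X) : Prop :=
  (∀ i, FreelyRat (v i)) ∧
    ∀ A : Set X, ∀ x ∈ A, (x ∈ c A ↔ 2 * Nat.card {i : Fin k // x ∈ v i A} > k)

/-- The liberal number of `c`: the minimum size of a liberal representation (⊤ if none). -/
noncomputable def lib {X : Type*} (c : Set X → Set X) : ℕ∞ :=
  sInf {n : ℕ∞ | ∃ (k : ℕ) (v : Fin k → Set X → Set X), 0 < k ∧ IsLiberalRep c v ∧ n = (k : ℕ∞)}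

/-- The democratic number of `c`: the minimum size of a democratic representation (⊤ if none). -/
noncomputable def dem {X : Type*} (c : Set X → Set X) : ℕ∞ :=
  sInf {n : ℕ∞ | ∃ (k : ℕ) (v : Fin k → Set X → Set X), 0 < k ∧ IsDemRep c v ∧ n = (k : ℕ∞)}

/-- `c` is `s`-majoritarian: some finite family of ballots selects exactly the items
endorsed by a share of ballots strictly larger than `s`. -/
def Majoritarian {X : Type*} (s : ℝ) (c : Set X → Set X) : Prop :=
  ∃ (k : ℕ) (v : Fin k → Set X → Set X), 0 < k ∧ (∀ i, FreelyRat (v i)) ∧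
    ∀ A : Set X, ∀ x ∈ A,
      (x ∈ c A ↔ (Nat.card {i : Fin k // x ∈ v i A} : ℝ) / (k : ℝ) > s)

theorem stmt7 {X : Type*} [Fintype X] (c : Set X → Set X) (hq : IsQuasiChoice c)
    (ha : AxiomAlpha c) :
    ∃ (k : ℕ) (v : Fin k → Set X → Set X), 0 < k ∧ (∀ i, FreelyRat (v i)) ∧
      ∀ A : Set X, c A = ⋃ i, v i A := by
  classical
  set n := Fintype.card (Set X) with hn
  have e : Set X ≃ Fin n := Fintype.equivFin (Set X)
  refine ⟨n, fun i A => {a ∈ A | ∀ b ∈ A, ¬ ¬(a ∈ c (e.symm i) ∧ b ∈ e.symm i)}, ?_, ?_, ?_⟩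
  · exact Fintype.card_pos
  · intro i
    exact ⟨fun b a => ¬(a ∈ c (e.symm i) ∧ b ∈ e.symm i), fun A => rfl⟩
  · intro A
    ext x
    simp only [Set.mem_iUnion, Set.mem_setOf_eq, not_not]
    constructor
    · intro hx
      exact ⟨e A, hq A hx, fun b hb => by
        simp only [Equiv.symm_apply_apply]; exact ⟨hx, hb⟩⟩
    · rintro ⟨i, hxA, h⟩
      have hxc : x ∈ c (e.symm i) := (h x hxA).1
      have hsub : A ⊆ e.symm i := fun b hb => (h b hb).2
      exact ha hsub hxA hxc
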